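/- Suppose |S| = |R| = n, M_0 = ∅, and for i = 1,…,n, P_i is an augmenting path with respect to M_{i−1} starting at request r_i and ending at server s_i, and M_i = M_{i−1} ⊕ P_i. Fix t > 1 and assume φ_t(P_i) ≤ t·d(s_i, r_i) for every i (this holds when each P_i is a minimum t-net-cost augmenting path, since the single edge (s_i, r_i) is itself an augmenting path). Let H = {i : (t−1)·ℓ(P_i) ≤ 4·φ_t(P_i)} be the set of short paths. Then (4 + 4/(t−1)) · ∑_{i ∈ H} d(s_i, r_i) ≥ ∑_{i=1}^{n} d(s_i, r_i); i.e., the cost of the short edges of the online matching M = {(s_i, r_i) : 1 ≤ i ≤ n} is at least a (t−1)/(4t) fraction of the total online matching cost. -/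

import Mathlib

/-- The cost of a matching, viewed as a finite set of (server, request) pairs. -/
noncomputable def matchCost {X : Type*} [MetricSpace X] (M : Finset (X × X)) : ℝ :=
  ∑ e ∈ M, dist e.1 e.2

/-- `M` is a matching between the finite point sets `S` and `R`: every edge
goes from `S` to `R` and every point appears in at most one edge. -/
def IsMatching {X : Type*} (S R : Finset X) (M : Finset (X × X)) : Prop :=
  (∀ e ∈ M, e.1 ∈ S ∧ e.2 ∈ R) ∧
    ∀ e ∈ M, ∀ e' ∈ M, e ≠ e' → e.1 ≠ e'.1 ∧ e.2 ≠ e'.2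

/-- An augmenting path with respect to the matching `M`, given in 0-indexed
form: the path is `r^0, s^1, r^1, …, r^{k-1}, s^k` where `rp j = r^j`
(for `j < k`) and `sp j = s^{j+1}` (for `j < k`).  Its non-matching edges are
`(sp j, rp j)` for `j < k` and its matching edges are `(sp j, rp (j+1))` for
`j < k - 1`; the endpoints `rp 0` and `sp (k-1)` are unmatched in `M`, and all
`2k` points are distinct. -/
structure AugPath {X : Type*} (S R : Finset X) (M : Finset (X × X)) where
  k : ℕ
  hk : 1 ≤ k
  sp : ℕ → X
  rp : ℕ → X
  sp_mem : ∀ j < k, sp j ∈ S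
  rp_mem : ∀ j < k, rp j ∈ R
  sp_inj : ∀ j < k, ∀ j' < k, sp j = sp j' → j = j'
  rp_inj : ∀ j < k, ∀ j' < k, rp j = rp j' → j = j'
  edge_mem : ∀ j < k - 1, (sp j, rp (j + 1)) ∈ M
  edge_not_mem : ∀ j < k, (sp j, rp j) ∉ M
  free_start : ∀ e ∈ M, e.2 ≠ rp 0
  free_end : ∀ e ∈ M, e.1 ≠ sp (k - 1)

/-- The `t`-net-cost `φ_t(P)` of an augmenting path. -/
noncomputable def AugPath.netCost {X : Type*} [MetricSpace X] {S R : Finset X}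
    {M : Finset (X × X)} (P : AugPath S R M) (t : ℝ) : ℝ :=
  t * ∑ j ∈ Finset.range P.k, dist (P.sp j) (P.rp j) -
    ∑ j ∈ Finset.range (P.k - 1), dist (P.sp j) (P.rp (j + 1))

/-- The length `ℓ(P)` of an augmenting path. -/
noncomputable def AugPath.len {X : Type*} [MetricSpace X] {S R : Finset X}
    {M : Finset (X × X)} (P : AugPath S R M) : ℝ :=
  (∑ j ∈ Finset.range P.k, dist (P.sp j) (P.rp j)) +
    ∑ j ∈ Finset.range (P.k - 1), dist (P.sp j) (P.rp (j + 1))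

/-- The matching `M ⊕ P` obtained by augmenting `M` along `P`. -/
def AugPath.augment {X : Type*} [DecidableEq X] {S R : Finset X}
    {M : Finset (X × X)} (P : AugPath S R M) : Finset (X × X) :=
  (M \ (Finset.range (P.k - 1)).image (fun j => (P.sp j, P.rp (j + 1)))) ∪
    (Finset.range P.k).image (fun j => (P.sp j, P.rp j))

/-- With `|S| = |R| = n`, `M_0 = ∅` and `M_i = M_{i−1} ⊕ P_i`
(0-indexed below), where `P_i` starts at request `r_i = (P i).rp 0` and ends at
server `s_i = (P i).sp ((P i).k − 1)`, fix `t > 1` and assume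
`φ_t(P_i) ≤ t·d(s_i, r_i)` for every `i`.  Let `H` be the set of short paths,
i.e. those `i` with `(t−1)·ℓ(P_i) ≤ 4·φ_t(P_i)`.  Then
`(4 + 4/(t−1)) · ∑_{i ∈ H} d(s_i, r_i) ≥ ∑_{i=1}^{n} d(s_i, r_i)`:
the cost of the short edges of the online matching is at least a
`(t−1)/(4t)` fraction of the total online matching cost. -/

private lemma augpath_dist_le (X : Type*) [MetricSpace X] {S R : Finset X}
    {M : Finset (X × X)} (P : AugPath S R M) :
    dist (P.sp (P.k - 1)) (P.rp 0) ≤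
      (∑ j ∈ Finset.range P.k, dist (P.sp j) (P.rp j)) +
        ∑ j ∈ Finset.range (P.k - 1), dist (P.sp j) (P.rp (j + 1)) := by
  have key : ∀ m, dist (P.sp m) (P.rp 0) ≤
      (∑ j ∈ Finset.range (m + 1), dist (P.sp j) (P.rp j)) +
        ∑ j ∈ Finset.range m, dist (P.sp j) (P.rp (j + 1)) := by
    intro m
    induction m with
    | zero => simp
    | succ m ih =>
      have tri : dist (P.sp (m + 1)) (P.rp 0) ≤
          dist (P.sp (m + 1)) (P.rp (m + 1)) + dist (P.rp (m + 1)) (P.sp m) +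
            dist (P.sp m) (P.rp 0) := dist_triangle4 _ _ _ _
      rw [Finset.sum_range_succ, Finset.sum_range_succ (fun j => dist (P.sp j) (P.rp (j + 1)))]
      have hcomm : dist (P.rp (m + 1)) (P.sp m) = dist (P.sp m) (P.rp (m + 1)) := dist_comm _ _
      linarith [ih]
  have := key (P.k - 1)
  rwa [Nat.sub_add_cancel P.hk] at this

private lemma augpath_cost (X : Type*) [MetricSpace X] [DecidableEq X] {S R : Finset X}
    {M : Finset (X × X)} (P : AugPath S R M) :
    matchCost P.augment = matchCost M
      + (∑ j ∈ Finset.range P.k, dist (P.sp j) (P.rp j))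
      - ∑ j ∈ Finset.range (P.k - 1), dist (P.sp j) (P.rp (j + 1)) := by
  classical
  set old := (Finset.range (P.k - 1)).image (fun j => (P.sp j, P.rp (j + 1))) with hold
  set new := (Finset.range P.k).image (fun j => (P.sp j, P.rp j)) with hnew
  have hsub : old ⊆ M := by
    intro e he
    rw [hold, Finset.mem_image] at he
    obtain ⟨j, hj, rfl⟩ := he
    exact P.edge_mem j (Finset.mem_range.mp hj)
  have hdisj : Disjoint (M \ old) new := by
    rw [Finset.disjoint_right]
    intro e he
    rw [hnew, Finset.mem_image] at he
    obtain ⟨j, hj, rfl⟩ := he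
    intro hmem
    exact P.edge_not_mem j (Finset.mem_range.mp hj) (Finset.mem_sdiff.mp hmem).1
  have hlt : ∀ j, j < P.k - 1 → j < P.k := fun j hj => lt_of_lt_of_le hj (Nat.sub_le _ _)
  have sold : ∑ e ∈ old, dist e.1 e.2
      = ∑ j ∈ Finset.range (P.k - 1), dist (P.sp j) (P.rp (j + 1)) := by
    rw [hold]
    refine Finset.sum_image ?_
    intro x hx y hy hxy
    have := congrArg Prod.fst hxy
    exact P.sp_inj x (hlt x (Finset.mem_range.mp hx)) y (hlt y (Finset.mem_range.mp hy)) this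
  have snew : ∑ e ∈ new, dist e.1 e.2
      = ∑ j ∈ Finset.range P.k, dist (P.sp j) (P.rp j) := by
    rw [hnew]
    refine Finset.sum_image ?_
    intro x hx y hy hxy
    have := congrArg Prod.fst hxy
    exact P.sp_inj x (Finset.mem_range.mp hx) y (Finset.mem_range.mp hy) this
  have hMsplit : ∑ e ∈ M \ old, dist e.1 e.2 + ∑ e ∈ old, dist e.1 e.2
      = ∑ e ∈ M, dist e.1 e.2 := Finset.sum_sdiff hsub
  have : matchCost P.augment
      = ∑ e ∈ M \ old, dist e.1 e.2 + ∑ e ∈ new, dist e.1 e.2 := by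
    rw [matchCost, AugPath.augment, ← hold, ← hnew, Finset.sum_union hdisj]
  rw [this, snew, matchCost]
  linarith

private lemma main_arith {n : ℕ} (a b d : Fin n → ℝ) (t : ℝ) (ht : 1 < t)
    (ha : ∀ i, 0 ≤ a i) (hb : ∀ i, 0 ≤ b i) (hd : ∀ i, 0 ≤ d i)
    (hdl : ∀ i, d i ≤ a i + b i)
    (hW : 0 ≤ ∑ i, (a i - b i))
    (hmin : ∀ i, t * a i - b i ≤ t * d i)
    (H : Finset (Fin n))
    (hH : ∀ i, i ∈ H ↔ (t - 1) * (a i + b i) ≤ 4 * (t * a i - b i)) :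
    ∑ i, d i ≤ (4 + 4 / (t - 1)) * ∑ i ∈ H, d i := by
  have ht1 : (0:ℝ) < t - 1 := by linarith
  have L_def : ∑ i, (t * a i - b i)
      = (t - 1) / 2 * (∑ i, (a i + b i)) + (t + 1) / 2 * (∑ i, (a i - b i)) := by
    rw [Finset.mul_sum, Finset.mul_sum, ← Finset.sum_add_distrib]
    exact Finset.sum_congr rfl fun i _ => by ring
  have h1 : (t - 1) / 2 * (∑ i, (a i + b i)) ≤ ∑ i, (t * a i - b i) := by
    rw [L_def]; nlinarith [hW]
  have h2 : ∑ i ∈ H, (t * a i - b i) ≤ t * ∑ i ∈ H, d i := by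
    rw [Finset.mul_sum]; exact Finset.sum_le_sum fun i _ => hmin i
  have h3 : ∑ i ∈ Hᶜ, (t * a i - b i) ≤ (t - 1) / 4 * ∑ i ∈ Hᶜ, (a i + b i) := by
    rw [Finset.mul_sum]
    refine Finset.sum_le_sum fun i hi => ?_
    have hni : ¬ ((t - 1) * (a i + b i) ≤ 4 * (t * a i - b i)) := by
      have := Finset.mem_compl.mp hi
      rw [hH i] at this; exact this
    push_neg at hni
    linarith
  have h4 : ∑ i ∈ Hᶜ, (a i + b i) ≤ ∑ i, (a i + b i) :=
    Finset.sum_le_sum_of_subset_of_nonneg (Finset.subset_univ _)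
      (fun i _ _ => add_nonneg (ha i) (hb i))
  have hsplit : ∑ i ∈ H, (t * a i - b i) + ∑ i ∈ Hᶜ, (t * a i - b i)
      = ∑ i, (t * a i - b i) := Finset.sum_add_sum_compl H _
  have h5 : (t - 1) / 4 * (∑ i, (a i + b i)) ≤ t * ∑ i ∈ H, d i := by
    nlinarith [h1, h2, h3, h4, hsplit]
  have hDd : ∑ i, d i ≤ ∑ i, (a i + b i) := Finset.sum_le_sum fun i _ => hdl i
  have heq : 4 + 4 / (t - 1) = 4 * t / (t - 1) := by field_simp; ring
  rw [heq, div_mul_eq_mul_div, le_div_iff₀ ht1]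
  nlinarith [h5, hDd, mul_nonneg (le_of_lt ht1) (sub_nonneg.mpr hDd)]

theorem short_edges_cost_fraction {X : Type*} [MetricSpace X] [DecidableEq X]
    (S R : Finset X) (hdisj : Disjoint S R) (n : ℕ)
    (hS : S.card = n) (hR : R.card = n)
    (M : ℕ → Finset (X × X)) (hM0 : M 0 = ∅)
    (P : (i : Fin n) → AugPath S R (M i))
    (hrec : ∀ i : Fin n, M ((i : ℕ) + 1) = (P i).augment)
    (t : ℝ) (ht : 1 < t)
    (hmin : ∀ i : Fin n,
      (P i).netCost t ≤ t * dist ((P i).sp ((P i).k - 1)) ((P i).rp 0)) :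
    ∑ i, dist ((P i).sp ((P i).k - 1)) ((P i).rp 0) ≤
      (4 + 4 / (t - 1)) *
        ∑ i ∈ Finset.univ.filter
            (fun i => (t - 1) * (P i).len ≤ 4 * (P i).netCost t),
          dist ((P i).sp ((P i).k - 1)) ((P i).rp 0) := by
  classical
  set a : Fin n → ℝ := fun i => ∑ j ∈ Finset.range (P i).k, dist ((P i).sp j) ((P i).rp j)
    with ha_def
  set b : Fin n → ℝ :=
    fun i => ∑ j ∈ Finset.range ((P i).k - 1), dist ((P i).sp j) ((P i).rp (j + 1)) with hb_def
  have hW : 0 ≤ ∑ i, (a i - b i) := by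
    have key : ∀ m, m ≤ n → matchCost (M m)
        = ∑ i ∈ Finset.range m, (if h : i < n then a ⟨i, h⟩ - b ⟨i, h⟩ else 0) := by
      intro m
      induction m with
      | zero => intro _; simp [hM0, matchCost]
      | succ m ih =>
        intro hm
        have hmn : m < n := hm
        have hr : M (m + 1) = (P ⟨m, hmn⟩).augment := hrec ⟨m, hmn⟩
        rw [hr, augpath_cost X (P ⟨m, hmn⟩), ih (le_of_lt hmn), Finset.sum_range_succ,
          dif_pos hmn]
        simp only [ha_def, hb_def]
        ring
    have hcost : 0 ≤ matchCost (M n) := Finset.sum_nonneg fun e _ => dist_nonneg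
    rw [key n le_rfl] at hcost
    rw [← Fin.sum_univ_eq_sum_range (fun i => if h : i < n then a ⟨i, h⟩ - b ⟨i, h⟩ else 0) n]
      at hcost
    simpa using hcost
  refine main_arith a b (fun i => dist ((P i).sp ((P i).k - 1)) ((P i).rp 0)) t ht
    (fun i => Finset.sum_nonneg fun j _ => dist_nonneg)
    (fun i => Finset.sum_nonneg fun j _ => dist_nonneg)
    (fun i => dist_nonneg)
    (fun i => augpath_dist_le X (P i))
    hW
    (fun i => hmin i)
    _
    (fun i => ?_)
  simp only [Finset.mem_filter, Finset.mem_univ, true_and, AugPath.len, AugPath.netCost,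
    ha_def, hb_def]
  exact Finset.mem_filter.trans (and_iff_right (Finset.mem_univ _))
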